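/- Given an integer $B \geq 1$ and an integer number of training slots $N_t$ divisible by $2^B$, define $g(B) = \pi\,(2^{-B})^{N_t/2^B}$ (the phase-error upper bound of Algorithm A1). Then $g(1) = g(2)$, and for all integers $B \geq 2$ with $N_t \geq 2^{B+1}$, $g(B+1) > g(B)$; hence $B=1$ or $B=2$ minimizes the phase-error bound. -/

import Mathlib

open Real

theorem stmt_3 (Nt : ℕ) (g : ℕ → ℝ)
    (hg : ∀ B : ℕ, g B = π * ((2 : ℝ) ^ (-(B : ℝ))) ^ ((Nt : ℝ) / 2 ^ B)) :
    g 1 = g 2 ∧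
    ∀ B : ℕ, 2 ≤ B → 2 ^ (B + 1) ≤ Nt → g B < g (B + 1) := by
  have h2 : (0:ℝ) ≤ 2 := by norm_num
  have key : ∀ B : ℕ, g B = π * (2:ℝ) ^ (-(B : ℝ) * ((Nt : ℝ) / 2 ^ B)) := by
    intro B
    rw [hg, Real.rpow_mul h2]
  constructor
  · rw [key 1, key 2]
    congr 1
    norm_num
    ring
  · intro B hB hNt
    rw [key B, key (B + 1)]
    have hπ := Real.pi_pos
    have hpow : (0:ℝ) < 2 ^ B := by positivity
    have hB' : (2:ℝ) ≤ (B:ℝ) := by exact_mod_cast hB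
    have hNt' : (0:ℝ) < (Nt:ℝ) := by
      have : 0 < Nt := lt_of_lt_of_le (pow_pos (by norm_num) (B+1)) hNt
      exact_mod_cast this
    have ht : (0:ℝ) < (Nt:ℝ) / 2 ^ B := div_pos hNt' hpow
    have hexp : -(B:ℝ) * ((Nt:ℝ) / 2 ^ B) < -((B+1 : ℕ):ℝ) * ((Nt:ℝ) / 2 ^ (B+1)) := by
      push_cast
      rw [pow_succ]
      have heq : (Nt:ℝ) / (2 ^ B * 2) = ((Nt:ℝ) / 2 ^ B) / 2 := by
        field_simp
      rw [heq]
      nlinarith [ht, hB']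
    apply mul_lt_mul_of_pos_left _ hπ
    exact Real.rpow_lt_rpow_of_exponent_lt (by norm_num) hexp
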